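/- The symplectic group Sp(2n, 2) over the field with 2 elements, with n ≥ 2, contains a nontrivial 2-radical element: there exists g in the symplectic group of 2n×2n matrices over ZMod 2 with g ≠ 1 such that for all x, y in the symplectic group, the subgroup generated by the commutators ⁅g,x⁆ and ⁅g,y⁆ is solvable. -/

import Mathlib

open Subgroup

variable {G : Type*} [Group G]

attribute [local instance] commutatorElement

lemma conj_mem_of_gen (S : Set G) (N : Subgroup G)
    (hnorm : ∀ s ∈ S, ∀ n ∈ N, s * n * s⁻¹ ∈ N ∧ s⁻¹ * n * s ∈ N) :
    ∀ h ∈ closure S, ∀ n ∈ N, h * n * h⁻¹ ∈ N := by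
  have key : ∀ h ∈ closure S, (∀ n ∈ N, h * n * h⁻¹ ∈ N) ∧ (∀ n ∈ N, h⁻¹ * n * h ∈ N) := by
    intro h hh
    induction hh using closure_induction with
    | mem s hs => exact ⟨fun n hn => (hnorm s hs n hn).1, fun n hn => (hnorm s hs n hn).2⟩
    | one => exact ⟨fun n hn => by simpa using hn, fun n hn => by simpa using hn⟩
    | mul x y hx hy ihx ihy =>
      constructor
      · intro n hn
        have := ihx.1 (y * n * y⁻¹) (ihy.1 n hn)
        simpa [mul_assoc] using this
      · intro n hn
        have := ihy.2 (x⁻¹ * n * x) (ihx.2 n hn)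
        simpa [mul_assoc] using this
    | inv x hx ihx =>
      exact ⟨fun n hn => by simpa [mul_assoc] using ihx.2 n hn,
             fun n hn => by simpa [mul_assoc] using ihx.1 n hn⟩
  exact fun h hh => (key h hh).1

lemma comm_mem_of_gen (S : Set G) (N : Subgroup G)
    (hnorm : ∀ s ∈ S, ∀ n ∈ N, s * n * s⁻¹ ∈ N ∧ s⁻¹ * n * s ∈ N)
    (hgen : ∀ s ∈ S, ∀ t ∈ S, ⁅s, t⁆ ∈ N) :
    ∀ u ∈ closure S, ∀ v ∈ closure S, ⁅u, v⁆ ∈ N := by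
  have hconj := conj_mem_of_gen S N hnorm
  -- first: generators against all of closure
  have step1 : ∀ s ∈ S, ∀ v ∈ closure S, ⁅s, v⁆ ∈ N := by
    intro s hs v hv
    induction hv using closure_induction with
    | mem t ht => exact hgen s hs t ht
    | one => simpa using N.one_mem
    | mul x y hx hy ihx ihy =>
      have hxc : x ∈ closure S := hx
      have : ⁅s, x * y⁆ = ⁅s, x⁆ * (x * ⁅s, y⁆ * x⁻¹) := by
        simp only [commutatorElement_def]; group
      rw [this]
      exact N.mul_mem ihx (hconj x hxc _ ihy)
    | inv x hx ihx =>
      have : ⁅s, x⁻¹⁆ = x⁻¹ * ⁅s, x⁆⁻¹ * x := by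
        simp only [commutatorElement_def]; group
      rw [this]
      simpa using hconj x⁻¹ ((closure S).inv_mem hx) _ (N.inv_mem ihx)
  intro u hu v hv
  induction hu using closure_induction with
  | mem s hs => exact step1 s hs v hv
  | one => simpa using N.one_mem
  | mul x y hx hy ihx ihy =>
    have : ⁅x * y, v⁆ = (x * ⁅y, v⁆ * x⁻¹) * ⁅x, v⁆ := by
      simp only [commutatorElement_def]; group
    rw [this]
    exact N.mul_mem (hconj x hx _ ihy) ihx
  | inv x hx ihx =>
    have : ⁅x⁻¹, v⁆ = x⁻¹ * ⁅x, v⁆⁻¹ * x := by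
      simp only [commutatorElement_def]; group
    rw [this]
    simpa using hconj x⁻¹ ((closure S).inv_mem hx) _ (N.inv_mem ihx)

/-- If all commutators of `H` lie in a subgroup `N` whose elements commute
pairwise, then `H` is solvable (derived length ≤ 2). -/
lemma solvable_of_comm_mem (H : Subgroup G) (N : Subgroup G)
    (hcomm : ∀ u ∈ H, ∀ v ∈ H, ⁅u, v⁆ ∈ N)
    (hab : ∀ x ∈ N, ∀ y ∈ N, x * y = y * x) :
    IsSolvable H := by
  refine ⟨⟨2, ?_⟩⟩
  have h1 : derivedSeries H 1 ≤ N.comap H.subtype := by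
    rw [derivedSeries_succ]
    rw [Subgroup.commutator_le]
    intro p _ q _
    have : (↑(⁅p, q⁆ : H) : G) = ⁅(p : G), (q : G)⁆ := rfl
    simp only [Subgroup.mem_comap, Subgroup.coe_subtype, this]
    exact hcomm p p.2 q q.2
  have h2 : derivedSeries H 2 ≤ ⁅N.comap H.subtype, N.comap H.subtype⁆ := by
    rw [show (2:ℕ) = 1 + 1 from rfl, derivedSeries_succ]
    exact Subgroup.commutator_mono h1 h1
  have h3 : ⁅N.comap H.subtype, N.comap H.subtype⁆ = (⊥ : Subgroup H) := by
    rw [eq_bot_iff, Subgroup.commutator_le]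
    intro p hp q hq
    rw [Subgroup.mem_bot]
    have : (p : G) * q = q * p := hab p (by simpa [Subgroup.mem_subgroupOf] using hp) q (by simpa [Subgroup.mem_subgroupOf] using hq)
    ext
    show ((p:G) * q * (p:G)⁻¹ * (q:G)⁻¹) = 1
    rw [this]; group
  rw [eq_bot_iff]
  exact h2.trans (le_of_eq h3)

/-- elements of the closure of a pairwise-commuting set commute -/
lemma closure_comm (S : Set G) (hS : ∀ x ∈ S, ∀ y ∈ S, x * y = y * x) :
    ∀ u ∈ closure S, ∀ v ∈ closure S, u * v = v * u := by
  intro u hu v hv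
  induction hu using closure_induction with
  | mem s hs =>
    induction hv using closure_induction with
    | mem t ht => exact hS s hs t ht
    | one => simp
    | mul x y hx hy ihx ihy =>
      rw [← mul_assoc, ihx, mul_assoc, ihy, mul_assoc]
    | inv x hx ihx => exact (Commute.inv_right ihx :)
  | one => simp
  | mul x y hx hy ihx ihy =>
    rw [mul_assoc, ihy, ← mul_assoc, ihx, mul_assoc]
  | inv x hx ihx => exact (Commute.inv_left ihx :)

lemma conj_closure_mem (s : G) (T : Set G)
    (h : ∀ t ∈ T, s * t * s⁻¹ ∈ closure T) :
    ∀ n ∈ closure T, s * n * s⁻¹ ∈ closure T := by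
  intro n hn
  induction hn using closure_induction with
  | mem t ht => exact h t ht
  | one => simpa using (closure T).one_mem
  | mul x y hx hy ihx ihy =>
    have : s * (x * y) * s⁻¹ = (s * x * s⁻¹) * (s * y * s⁻¹) := by group
    rw [this]; exact (closure T).mul_mem ihx ihy
  | inv x hx ihx =>
    have : s * x⁻¹ * s⁻¹ = (s * x * s⁻¹)⁻¹ := by group
    rw [this]; exact (closure T).inv_mem ihx

/-- dihedral case: two involutions generate a solvable group -/
lemma L2 (a b : G) (ha : a * a = 1) (hb : b * b = 1) :
    IsSolvable (closure ({a, b} : Set G)) := by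
  have ha' : a⁻¹ = a := inv_eq_of_mul_eq_one_right ha
  have hb' : b⁻¹ = b := inv_eq_of_mul_eq_one_right hb
  have hconj_a : a * (a * b) * a⁻¹ = (a * b)⁻¹ := by
    rw [ha', mul_inv_rev, ha', hb']
    calc a * (a * b) * a = (a * a) * (b * a) := by group
      _ = b * a := by rw [ha, one_mul]
  have hconj_b : b * (a * b) * b⁻¹ = (a * b)⁻¹ := by
    rw [hb', mul_inv_rev, ha', hb']
    calc b * (a * b) * b = (b * a) * (b * b) := by group
      _ = b * a := by rw [hb, mul_one]
  have hmemconj : ∀ s : G, s * (a * b) * s⁻¹ ∈ zpowers (a * b) →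
      ∀ n ∈ zpowers (a * b), s * n * s⁻¹ ∈ zpowers (a * b) := by
    intro s hs n hn
    obtain ⟨m, rfl⟩ := hn
    rw [show s * (a * b) ^ m * s⁻¹ = (s * (a * b) * s⁻¹) ^ m by rw [conj_zpow]]
    exact Subgroup.zpow_mem _ hs m
  have hca : a * (a * b) * a⁻¹ ∈ zpowers (a * b) := by
    rw [hconj_a]; exact Subgroup.inv_mem _ (mem_zpowers _)
  have hcb : b * (a * b) * b⁻¹ ∈ zpowers (a * b) := by
    rw [hconj_b]; exact Subgroup.inv_mem _ (mem_zpowers _)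
  apply solvable_of_comm_mem _ (zpowers (a * b))
  · apply comm_mem_of_gen
    · intro s hs
      have hs' : s = a ∨ s = b := hs
      have key : ∀ n ∈ zpowers (a * b), s * n * s⁻¹ ∈ zpowers (a * b) := by
        rcases hs' with h | h <;> rw [h] <;> exact hmemconj _ (by assumption)
      intro n hn
      refine ⟨key n hn, ?_⟩
      have hsinv : s⁻¹ = s := by rcases hs' with h | h <;> rw [h] <;> assumption
      rw [show s⁻¹ * n * s = s * n * s⁻¹ by rw [hsinv]]
      exact key n hn
    · intro s hs t ht
      have hs' : s = a ∨ s = b := hs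
      have ht' : t = a ∨ t = b := ht
      have hab2 : ⁅a, b⁆ ∈ zpowers (a * b) := by
        have : ⁅a, b⁆ = (a * b) * (a * b) := by
          rw [commutatorElement_def, ha', hb']; group
        rw [this]; exact Subgroup.mul_mem _ (mem_zpowers _) (mem_zpowers _)
      have hba2 : ⁅b, a⁆ ∈ zpowers (a * b) := by
        rw [show ⁅b, a⁆ = ⁅a, b⁆⁻¹ from (commutatorElement_inv a b).symm]
        exact Subgroup.inv_mem _ hab2
      rcases hs' with h | h <;> rcases ht' with h2 | h2 <;> rw [h, h2] <;>
        simp [hab2, hba2, commutatorElement_self, Subgroup.one_mem]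
  · intro x hx y hy
    obtain ⟨m, rfl⟩ := hx
    obtain ⟨l, rfl⟩ := hy
    exact zpow_mul_comm _ m l

/-- A4-type case: involution and order-3 element with product of order 3 -/
lemma L3 (a b : G) (ha : a * a = 1) (hb : b * (b * b) = 1)
    (hab3 : (a * b) * ((a * b) * (a * b)) = 1) :
    IsSolvable (closure ({a, b} : Set G)) := by
  have ha' : a⁻¹ = a := inv_eq_of_mul_eq_one_right ha
  have hb' : b⁻¹ = b * b := inv_eq_of_mul_eq_one_right hb
  have hb_t : ∀ z : G, b * (b * (b * z)) = z := by
    intro z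
    calc b * (b * (b * z)) = (b * (b * b)) * z := by group
      _ = z := by rw [hb, one_mul]
  have hbbz : ∀ z : G, b⁻¹ * (b⁻¹ * z) = b * z := by
    intro z
    rw [hb']
    calc (b * b) * ((b * b) * z) = b * (b * (b * (b * z))) := by group
      _ = b * z := hb_t _
  have hbb0 : b⁻¹ * b⁻¹ = b := by
    rw [hb']
    calc (b * b) * (b * b) = b * (b * (b * b)) := by group
      _ = b := hb_t b
  have hE0 : (a * b)⁻¹ = (a * b) * (a * b) := inv_eq_of_mul_eq_one_right hab3
  have E : ∀ z : G, a * (b * (a * (b * z))) = b⁻¹ * (a * z) := by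
    intro z
    calc a * (b * (a * (b * z))) = ((a * b) * (a * b)) * z := by group
      _ = (a * b)⁻¹ * z := by rw [← hE0]
      _ = b⁻¹ * (a * z) := by rw [mul_inv_rev, ha']; group
  have K1 : ∀ z : G, a * (b * (a * z)) = b⁻¹ * (a * (b⁻¹ * z)) := by
    intro z
    have h := E (b⁻¹ * z)
    rw [show b * (b⁻¹ * z) = z by group] at h
    exact h
  have K1₀ : a * (b * a) = b⁻¹ * (a * b⁻¹) := by
    have h := K1 1
    simpa using h
  -- p := b * (a * b⁻¹)
  set p := b * (a * b⁻¹) with hp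
  have hapa : a * (b * (a * (b⁻¹ * a))) = p := by
    rw [K1, hbbz, K1₀, hbbz, hp]
  have hconj_a_p : a * p * a⁻¹ = p := by
    rw [ha']
    calc a * p * a = a * (b * (a * (b⁻¹ * a))) := by rw [hp]; group
      _ = p := hapa
  have hpa_comm : a * p = p * a := by
    calc a * p = (a * p * a⁻¹) * a := by group
      _ = p * a := by rw [hconj_a_p]
  have hp2 : p * p = 1 := by
    rw [hp]
    calc (b * (a * b⁻¹)) * (b * (a * b⁻¹)) = b * ((a * a) * b⁻¹) := by group
      _ = 1 := by rw [ha]; group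
  have hconj_b_p : b * p * b⁻¹ = p * a := by
    have step : b * p * b⁻¹ = b * (b * (a * (b⁻¹ * b⁻¹))) := by rw [hp]; group
    rw [step, hbb0]
    -- goal : b * (b * (a * b)) = p * a
    have K3 : b * (a * b) = a * (b⁻¹ * a) := by
      -- from the (b*a)-relation
      have hba3 : (b * a) * ((b * a) * (b * a)) = 1 := by
        have h : (b * a) * ((b * a) * (b * a)) = b * ((a * b) * ((a * b) * (a * b))) * b⁻¹ := by
          group
        rw [h, hab3]; group
      have hF0 : (b * a)⁻¹ = (b * a) * (b * a) := inv_eq_of_mul_eq_one_right hba3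
      have F : ∀ z : G, b * (a * (b * (a * z))) = a⁻¹ * (b⁻¹ * z) := by
        intro z
        calc b * (a * (b * (a * z))) = ((b * a) * (b * a)) * z := by group
          _ = (b * a)⁻¹ * z := by rw [← hF0]
          _ = a⁻¹ * (b⁻¹ * z) := by rw [mul_inv_rev]; group
      have h := F a⁻¹
      rw [show a * a⁻¹ = 1 by group, mul_one] at h
      rw [ha'] at h
      exact h
    calc b * (b * (a * b)) = b * (a * (b⁻¹ * a)) := by rw [K3]
      _ = p * a := by rw [hp]; group
  have hconj_binv_a : b⁻¹ * a * b = a * p := by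
    have h := E b
    rw [show b * b = b⁻¹ from hb'.symm] at h
    rw [hp]
    calc b⁻¹ * a * b = b⁻¹ * (a * b) := by group
      _ = a * (b * (a * b⁻¹)) := by rw [← h]
  have hconj_binv_p : b⁻¹ * p * b = a := by
    rw [hp]; group
  -- now assemble
  have haN : a ∈ closure ({a, p} : Set G) := subset_closure (by simp)
  have hpN : p ∈ closure ({a, p} : Set G) := subset_closure (by simp)
  have key : ∀ w : G, (w = a ∨ w = b) → ∀ r ∈ ({a, p} : Set G),
      w * r * w⁻¹ ∈ closure ({a, p} : Set G) := by
    intro w hw r hr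
    rcases hr with h2 | h2 <;> rcases hw with h | h <;> rw [h, h2]
    · rw [show a * a * a⁻¹ = a by group]; exact haN
    · rw [show b * a * b⁻¹ = p by rw [hp]; group]; exact hpN
    · rw [hconj_a_p]; exact hpN
    · rw [hconj_b_p]; exact Subgroup.mul_mem _ hpN haN
  have key' : ∀ w : G, (w = a ∨ w = b) → ∀ r ∈ ({a, p} : Set G),
      w⁻¹ * r * w ∈ closure ({a, p} : Set G) := by
    intro w hw r hr
    rcases hr with h2 | h2 <;> rcases hw with h | h <;> rw [h, h2]
    · rw [show a⁻¹ * a * a = a by group]; exact haN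
    · rw [hconj_binv_a]; exact Subgroup.mul_mem _ haN hpN
    · rw [ha', show a * p * a = a * p * a⁻¹ by rw [ha'], hconj_a_p]; exact hpN
    · rw [hconj_binv_p]; exact haN
  apply solvable_of_comm_mem _ (closure ({a, p} : Set G))
  · apply comm_mem_of_gen
    · intro s hs
      have hs' : s = a ∨ s = b := hs
      intro n hn
      refine ⟨conj_closure_mem s _ (key s hs') n hn, ?_⟩
      have h2 : ∀ r ∈ ({a, p} : Set G), s⁻¹ * r * (s⁻¹)⁻¹ ∈ closure ({a, p} : Set G) := by
        intro r hr
        rw [inv_inv]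
        exact key' s hs' r hr
      have := conj_closure_mem s⁻¹ _ h2 n hn
      simpa using this
    · intro s hs t ht
      have hs' : s = a ∨ s = b := hs
      have ht' : t = a ∨ t = b := ht
      have habN : ⁅a, b⁆ ∈ closure ({a, p} : Set G) := by
        have : ⁅a, b⁆ = a * p := by
          rw [commutatorElement_def, ha', hp]; group
        rw [this]; exact Subgroup.mul_mem _ haN hpN
      have hbaN : ⁅b, a⁆ ∈ closure ({a, p} : Set G) := by
        rw [show ⁅b, a⁆ = ⁅a, b⁆⁻¹ from (commutatorElement_inv a b).symm]
        exact Subgroup.inv_mem _ habN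
      rcases hs' with h | h <;> rcases ht' with h2 | h2 <;> rw [h, h2] <;>
        simp [habN, hbaN, commutatorElement_self, Subgroup.one_mem]
  · -- closure {a, p} is abelian
    apply closure_comm
    intro x hx y hy
    have hx' : x = a ∨ x = p := hx
    have hy' : y = a ∨ y = p := hy
    rcases hx' with h | h <;> rcases hy' with h2 | h2 <;> rw [h, h2]
    · exact hpa_comm
    · exact hpa_comm.symm

/-- (3,3,3)-triangle-type case -/
lemma L4 (a c : G) (ha : a * (a * a) = 1) (hc : c * (c * c) = 1)
    (hac3 : (a * c) * ((a * c) * (a * c)) = 1) :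
    IsSolvable (closure ({a, c} : Set G)) := by
  have ha' : a⁻¹ = a * a := inv_eq_of_mul_eq_one_right ha
  have hc' : c⁻¹ = c * c := inv_eq_of_mul_eq_one_right hc
  have ha_t : ∀ z : G, a * (a * (a * z)) = z := fun z => by
    calc a * (a * (a * z)) = (a * (a * a)) * z := by group
      _ = z := by rw [ha, one_mul]
  have hc_t : ∀ z : G, c * (c * (c * z)) = z := fun z => by
    calc c * (c * (c * z)) = (c * (c * c)) * z := by group
      _ = z := by rw [hc, one_mul]
  have haaz : ∀ z : G, a * (a * z) = a⁻¹ * z := fun z => by rw [ha']; group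
  have hccz : ∀ z : G, c * (c * z) = c⁻¹ * z := fun z => by rw [hc']; group
  have haaz' : ∀ z : G, a⁻¹ * (a⁻¹ * z) = a * z := fun z => by
    rw [ha']
    calc (a * a) * ((a * a) * z) = a * (a * (a * (a * z))) := by group
      _ = a * z := ha_t _
  have hccz' : ∀ z : G, c⁻¹ * (c⁻¹ * z) = c * z := fun z => by
    rw [hc']
    calc (c * c) * ((c * c) * z) = c * (c * (c * (c * z))) := by group
      _ = c * z := hc_t _
  have hcc0 : c⁻¹ * c⁻¹ = c := by
    calc c⁻¹ * c⁻¹ = c⁻¹ * (c⁻¹ * 1) := by group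
      _ = c * 1 := hccz' 1
      _ = c := by group
  have haa0 : a * a = a⁻¹ := by rw [ha']
  have hE0 : (a * c)⁻¹ = (a * c) * (a * c) := inv_eq_of_mul_eq_one_right hac3
  have Ez : ∀ z : G, a * (c * (a * (c * z))) = c⁻¹ * (a⁻¹ * z) := by
    intro z
    calc a * (c * (a * (c * z))) = ((a * c) * (a * c)) * z := by group
      _ = (a * c)⁻¹ * z := by rw [← hE0]
      _ = c⁻¹ * (a⁻¹ * z) := by rw [mul_inv_rev]; group
  have R2 : ∀ z : G, a * (c * (a * z)) = c⁻¹ * (a⁻¹ * (c⁻¹ * z)) := by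
    intro z
    have h := Ez (c⁻¹ * z)
    rw [show c * (c⁻¹ * z) = z by group] at h
    exact h
  have R2₀ : a * (c * a) = c⁻¹ * (a⁻¹ * c⁻¹) := by
    have h := R2 1
    simpa using h
  have hca3 : (c * a) * ((c * a) * (c * a)) = 1 := by
    have h : (c * a) * ((c * a) * (c * a)) = c * ((a * c) * ((a * c) * (a * c))) * c⁻¹ := by
      group
    rw [h, hac3]; group
  have hF0 : (c * a)⁻¹ = (c * a) * (c * a) := inv_eq_of_mul_eq_one_right hca3
  have Fz : ∀ z : G, c * (a * (c * (a * z))) = a⁻¹ * (c⁻¹ * z) := by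
    intro z
    calc c * (a * (c * (a * z))) = ((c * a) * (c * a)) * z := by group
      _ = (c * a)⁻¹ * z := by rw [← hF0]
      _ = a⁻¹ * (c⁻¹ * z) := by rw [mul_inv_rev]; group
  have R1 : ∀ z : G, c * (a * (c * z)) = a⁻¹ * (c⁻¹ * (a⁻¹ * z)) := by
    intro z
    have h := Fz (a⁻¹ * z)
    rw [show a * (a⁻¹ * z) = z by group] at h
    exact h
  have R1₀ : c * (a * c) = a⁻¹ * (c⁻¹ * a⁻¹) := by
    have h := R1 1
    simpa using h
  set t1 := a * c⁻¹ with ht1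
  set t2 := c⁻¹ * a with ht2
  have ht12 : t1⁻¹ * t2⁻¹ = c * (a * c) := by
    calc t1⁻¹ * t2⁻¹ = c * (a⁻¹ * (a⁻¹ * c)) := by rw [ht1, ht2]; group
      _ = c * (a * c) := by rw [haaz']
  have hN1 : t1 ∈ closure ({t1, t2} : Set G) := subset_closure (by simp)
  have hN2 : t2 ∈ closure ({t1, t2} : Set G) := subset_closure (by simp)
  have hN12 : c * (a * c) ∈ closure ({t1, t2} : Set G) := by
    rw [← ht12]
    exact Subgroup.mul_mem _ (Subgroup.inv_mem _ hN1) (Subgroup.inv_mem _ hN2)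
  -- the 8 conjugation facts
  have hconj1 : a * t1 * a⁻¹ ∈ closure ({t1, t2} : Set G) := by
    have h : a * t1 * a⁻¹ = c * (a * c) := by
      calc a * t1 * a⁻¹ = a * (a * (c⁻¹ * a⁻¹)) := by rw [ht1]; group
        _ = a⁻¹ * (c⁻¹ * a⁻¹) := haaz _
        _ = c * (a * c) := R1₀.symm
    rw [h]; exact hN12
  have hconj2 : a * t2 * a⁻¹ ∈ closure ({t1, t2} : Set G) := by
    have h : a * t2 * a⁻¹ = t1 := by rw [ht1, ht2]; group
    rw [h]; exact hN1
  have hconj3 : a⁻¹ * t1 * a ∈ closure ({t1, t2} : Set G) := by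
    have h : a⁻¹ * t1 * a = t2 := by rw [ht1, ht2]; group
    rw [h]; exact hN2
  have hconj4 : a⁻¹ * t2 * a ∈ closure ({t1, t2} : Set G) := by
    have h : a⁻¹ * t2 * a = c * (a * c) := by
      calc a⁻¹ * t2 * a = a⁻¹ * (c⁻¹ * (a * a)) := by rw [ht2]; group
        _ = a⁻¹ * (c⁻¹ * a⁻¹) := by rw [haa0]
        _ = c * (a * c) := R1₀.symm
    rw [h]; exact hN12
  have hconj5 : c * t1 * c⁻¹ ∈ closure ({t1, t2} : Set G) := by
    have h : c * t1 * c⁻¹ = c * (a * c) := by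
      calc c * t1 * c⁻¹ = c * (a * (c⁻¹ * c⁻¹)) := by rw [ht1]; group
        _ = c * (a * c) := by rw [hcc0]
    rw [h]; exact hN12
  have hconj6 : c * t2 * c⁻¹ ∈ closure ({t1, t2} : Set G) := by
    have h : c * t2 * c⁻¹ = t1 := by rw [ht1, ht2]; group
    rw [h]; exact hN1
  have hconj7 : c⁻¹ * t1 * c ∈ closure ({t1, t2} : Set G) := by
    have h : c⁻¹ * t1 * c = t2 := by rw [ht1, ht2]; group
    rw [h]; exact hN2
  have hconj8 : c⁻¹ * t2 * c ∈ closure ({t1, t2} : Set G) := by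
    have h : c⁻¹ * t2 * c = c * (a * c) := by
      calc c⁻¹ * t2 * c = c⁻¹ * (c⁻¹ * (a * c)) := by rw [ht2]; group
        _ = c * (a * c) := hccz' _
    rw [h]; exact hN12
  -- commutator of generators
  have hcommN : ⁅a, c⁆ ∈ closure ({t1, t2} : Set G) := by
    have h : t1 * (t1 * t2) = ⁅a, c⁆ := by
      calc t1 * (t1 * t2) = a * (c⁻¹ * (a * (c⁻¹ * (c⁻¹ * a)))) := by rw [ht1, ht2]; group
        _ = a * (c⁻¹ * (a * (c * a))) := by rw [hccz']
        _ = a * (c⁻¹ * (c⁻¹ * (a⁻¹ * c⁻¹))) := by rw [R2₀]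
        _ = a * (c * (a⁻¹ * c⁻¹)) := by rw [hccz']
        _ = ⁅a, c⁆ := by rw [commutatorElement_def]; group
    rw [← h]
    exact Subgroup.mul_mem _ hN1 (Subgroup.mul_mem _ hN1 hN2)
  have hcommN' : ⁅c, a⁆ ∈ closure ({t1, t2} : Set G) := by
    rw [show ⁅c, a⁆ = ⁅a, c⁆⁻¹ from (commutatorElement_inv a c).symm]
    exact Subgroup.inv_mem _ hcommN
  -- abelian
  have habel : t1 * t2 = t2 * t1 := by
    calc t1 * t2 = a * (c⁻¹ * (c⁻¹ * a)) := by rw [ht1, ht2]; group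
      _ = a * (c * a) := by rw [hccz']
      _ = c⁻¹ * (a⁻¹ * c⁻¹) := R2₀
      _ = c⁻¹ * ((a * a) * c⁻¹) := by rw [haa0]
      _ = t2 * t1 := by rw [ht1, ht2]; group
  -- assemble
  apply solvable_of_comm_mem _ (closure ({t1, t2} : Set G))
  · apply comm_mem_of_gen
    · intro s hs
      have hs' : s = a ∨ s = c := hs
      intro n hn
      have key : ∀ r ∈ ({t1, t2} : Set G), s * r * s⁻¹ ∈ closure ({t1, t2} : Set G) := by
        intro r hr
        have hr' : r = t1 ∨ r = t2 := hr
        rcases hs' with h | h <;> rcases hr' with h2 | h2 <;> rw [h, h2] <;> assumption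
      have key' : ∀ r ∈ ({t1, t2} : Set G), s⁻¹ * r * (s⁻¹)⁻¹ ∈ closure ({t1, t2} : Set G) := by
        intro r hr
        have hr' : r = t1 ∨ r = t2 := hr
        rw [inv_inv]
        rcases hs' with h | h <;> rcases hr' with h2 | h2 <;> rw [h, h2] <;> assumption
      refine ⟨conj_closure_mem s _ key n hn, ?_⟩
      have := conj_closure_mem s⁻¹ _ key' n hn
      simpa using this
    · intro s hs t ht
      have hs' : s = a ∨ s = c := hs
      have ht' : t = a ∨ t = c := ht
      rcases hs' with h | h <;> rcases ht' with h2 | h2 <;> rw [h, h2] <;>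
        simp [hcommN, hcommN', commutatorElement_self, Subgroup.one_mem]
  · apply closure_comm
    intro x hx y hy
    have hx' : x = t1 ∨ x = t2 := hx
    have hy' : y = t1 ∨ y = t2 := hy
    rcases hx' with h | h <;> rcases hy' with h2 | h2 <;> rw [h, h2]
    · exact habel
    · exact habel.symm

lemma closure_pair_eq (a b : G) : closure ({a, b} : Set G) = closure ({a, a⁻¹ * b} : Set G) := by
  apply le_antisymm <;> rw [closure_le] <;> rintro x (rfl | rfl)
  · exact subset_closure (by simp)
  · have : x = a * (a⁻¹ * x) := by group
    rw [this]
    exact Subgroup.mul_mem _ (subset_closure (by simp)) (subset_closure (by simp))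
  · exact subset_closure (by simp)
  · exact Subgroup.mul_mem _ (Subgroup.inv_mem _ (subset_closure (by simp)))
      (subset_closure (by simp))

/-- master lemma: three involutions with pairwise products of order dividing 2 or 3
generate together with the indicated products a solvable closure. -/
lemma master (g h k : G) (hg : g * g = 1) (hh : h * h = 1) (hk : k * k = 1)
    (hgh : (g * h) * (g * h) = 1 ∨ (g * h) * ((g * h) * (g * h)) = 1)
    (hgk : (g * k) * (g * k) = 1 ∨ (g * k) * ((g * k) * (g * k)) = 1)
    (hhk : (h * k) * (h * k) = 1 ∨ (h * k) * ((h * k) * (h * k)) = 1) :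
    IsSolvable (closure ({g * h, g * k} : Set G)) := by
  have hg' : g⁻¹ = g := inv_eq_of_mul_eq_one_right hg
  have hh' : h⁻¹ = h := inv_eq_of_mul_eq_one_right hh
  have hk' : k⁻¹ = k := inv_eq_of_mul_eq_one_right hk
  set a := g * h with ha
  set b := g * k with hb
  have hc_ab : a⁻¹ * b = h * k := by
    rw [ha, hb, mul_inv_rev, hg', hh']
    calc h * g * (g * k) = h * (g * g) * k := by group
      _ = h * k := by rw [hg]; group
  have hd_ba : b⁻¹ * a = k * h := by
    rw [ha, hb, mul_inv_rev, hg', hk']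
    calc k * g * (g * h) = k * (g * g) * h := by group
      _ = k * h := by rw [hg]; group
  have hkh_inv : k * h = (h * k)⁻¹ := by rw [mul_inv_rev, hh', hk']
  rcases hgh with hgh2 | hgh3 <;> rcases hgk with hgk2 | hgk3
  · -- both order ≤ 2
    exact L2 a b hgh2 hgk2
  · -- a order 2, b order 3
    rw [closure_pair_eq a b, hc_ab]
    rcases hhk with hhk2 | hhk3
    · exact L2 a (h * k) hgh2 hhk2
    · refine L3 a (h * k) hgh2 hhk3 ?_
      have : a * (h * k) = b := by rw [← hc_ab]; group
      rw [this]
      exact hgk3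
  · -- a order 3, b order 2
    rw [Set.pair_comm, closure_pair_eq b a, hd_ba]
    rcases hhk with hhk2 | hhk3
    · refine L2 b (k * h) hgk2 ?_
      rw [hkh_inv, show (h * k)⁻¹ * (h * k)⁻¹ = ((h * k) * (h * k))⁻¹ by group, hhk2, inv_one]
    · refine L3 b (k * h) hgk2 ?_ ?_
      · rw [hkh_inv,
          show (h * k)⁻¹ * ((h * k)⁻¹ * (h * k)⁻¹) = ((h * k) * ((h * k) * (h * k)))⁻¹ by group,
          hhk3, inv_one]
      · have : b * (k * h) = a := by rw [← hd_ba]; group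
        rw [this]
        exact hgh3
  · -- both order 3
    rw [closure_pair_eq a b, hc_ab]
    rcases hhk with hhk2 | hhk3
    · rw [Set.pair_comm]
      refine L3 (h * k) a hhk2 hgh3 ?_
      have key : ((h * k) * a) * (((h * k) * a) * ((h * k) * a)) =
          a⁻¹ * ((a * (h * k)) * ((a * (h * k)) * (a * (h * k)))) * a := by group
      have hac : a * (h * k) = b := by rw [← hc_ab]; group
      rw [key, hac, hgk3]; group
    · refine L4 a (h * k) hgh3 hhk3 ?_
      have hac : a * (h * k) = b := by rw [← hc_ab]; group
      rw [hac]
      exact hgk3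


section RingLemmas

variable {A : Type*} [Ring A]

lemma ring_invol (char2 : ∀ x : A, x + x = 0) (P : A) (hPP : P * P = 0) :
    (1 + P) * (1 + P) = 1 := by
  have h : (1 + P) * (1 + P) = 1 + (P + P) + P * P := by noncomm_ring
  rw [h, char2, hPP]; abel

lemma ring_ord2 (char2 : ∀ x : A, x + x = 0) (P Q : A) (hPP : P * P = 0) (hQQ : Q * Q = 0)
    (hPQ : P * Q = 0) (hQP : Q * P = 0) :
    ((1 + P) * (1 + Q)) * ((1 + P) * (1 + Q)) = 1 := by
  have hs : (1 + P) * (1 + Q) = 1 + (P + Q) + P * Q := by noncomm_ring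
  rw [hPQ, add_zero] at hs
  rw [hs]
  have h : (1 + (P + Q)) * (1 + (P + Q)) =
      1 + ((P + Q) + (P + Q)) + (P * P + P * Q + Q * P + Q * Q) := by noncomm_ring
  rw [h, char2, hPP, hQQ, hPQ, hQP]; abel

lemma ring_ord3 (char2 : ∀ x : A, x + x = 0) (P Q M M' : A)
    (hPP : P * P = 0) (hQQ : Q * Q = 0)
    (hPQ : P * Q = M) (hQP : Q * P = M') (hPM : P * M = 0) (hMP : M * P = P)
    (hQM : Q * M = Q) (hMQ : M * Q = 0) (hMM : M * M = M)
    (hPM' : P * M' = P) (hQM' : Q * M' = 0) (hMM' : M * M' = 0) :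
    ((1 + P) * (1 + Q)) * (((1 + P) * (1 + Q)) * ((1 + P) * (1 + Q))) = 1 := by
  set a : A := P + Q + M with haA
  have hs : (1 + P) * (1 + Q) = 1 + a := by rw [haA, ← hPQ]; noncomm_ring
  have hA2 : a * a = P + Q + M' := by
    have expand : a * a = P*P + P*Q + P*M + Q*P + Q*Q + Q*M + M*P + M*Q + M*M := by
      rw [haA]; noncomm_ring
    rw [expand, hPP, hQQ, hPQ, hQP, hPM, hMP, hQM, hMQ, hMM]
    have collect : (0:A) + M + 0 + M' + 0 + Q + P + 0 + M = (M + M) + (P + Q + M') := by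
      abel
    rw [collect, char2, zero_add]
  have hA3 : a * (a * a) = M + M' := by
    rw [hA2]
    have expand : a * (P + Q + M') =
        P*P + P*Q + P*M' + Q*P + Q*Q + Q*M' + M*P + M*Q + M*M' := by
      rw [haA]; noncomm_ring
    rw [expand, hPP, hQQ, hPQ, hQP, hPM', hQM', hMP, hMQ, hMM']
    have collect : (0:A) + M + P + M' + 0 + 0 + P + 0 + 0 = (P + P) + (M + M') := by
      abel
    rw [collect, char2, zero_add]
  have hsum : a + a * a + a * (a * a) = 0 := by
    rw [hA3, hA2, haA]
    have collect : (P + Q + M) + (P + Q + M') + (M + M') =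
        ((P + P) + (Q + Q)) + ((M + M) + (M' + M')) := by abel
    rw [collect]; simp [char2]
  rw [hs]
  have expand : (1 + a) * ((1 + a) * (1 + a)) = 1 + ((a + a) + (a + a * a + a * (a * a))) +
      (a * a + a * a) := by noncomm_ring
  rw [expand, char2, char2, hsum]; abel

end RingLemmas

section MatrixPart

open Matrix

variable {n : ℕ}

abbrev MM (n : ℕ) := Matrix (Fin n ⊕ Fin n) (Fin n ⊕ Fin n) (ZMod 2)
abbrev VV (n : ℕ) := Matrix (Fin n ⊕ Fin n) Unit (ZMod 2)

lemma char2M : ∀ A : MM n, A + A = 0 := by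
  intro A; ext i j
  simp only [Matrix.add_apply, Matrix.zero_apply]
  exact CharTwo.add_self_eq_zero _

lemma char2neg : ∀ A : MM n, -A = A := by
  intro A; ext i j
  simp only [Matrix.neg_apply]
  exact CharTwo.neg_eq _

lemma hJJ : Matrix.J (Fin n) (ZMod 2) * Matrix.J (Fin n) (ZMod 2) = 1 := by
  rw [Matrix.J_squared]
  exact char2neg 1

lemma hJT : (Matrix.J (Fin n) (ZMod 2))ᵀ = Matrix.J (Fin n) (ZMod 2) := by
  rw [Matrix.J_transpose]
  exact char2neg _

lemma mulPat (v1 v2 v3 v4 : VV n) (c : ZMod 2)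
    (h : v2ᵀ * Matrix.J (Fin n) (ZMod 2) * v3 = c • 1) :
    (v1 * v2ᵀ * Matrix.J (Fin n) (ZMod 2)) * (v3 * v4ᵀ * Matrix.J (Fin n) (ZMod 2)) =
      c • (v1 * v4ᵀ * Matrix.J (Fin n) (ZMod 2)) := by
  calc (v1 * v2ᵀ * Matrix.J (Fin n) (ZMod 2)) * (v3 * v4ᵀ * Matrix.J (Fin n) (ZMod 2))
      = v1 * ((v2ᵀ * Matrix.J (Fin n) (ZMod 2) * v3) * (v4ᵀ * Matrix.J (Fin n) (ZMod 2))) := by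
        simp only [Matrix.mul_assoc]
    _ = c • (v1 * v4ᵀ * Matrix.J (Fin n) (ZMod 2)) := by
        rw [h, Matrix.smul_mul, Matrix.one_mul, Matrix.mul_smul]
        simp only [Matrix.mul_assoc]

lemma oneByOne (X : Matrix Unit Unit (ZMod 2)) : X = (X () ()) • 1 := by
  ext i j
  simp [Matrix.one_apply]

lemma transpose11 (X : Matrix Unit Unit (ZMod 2)) : Xᵀ = X := by
  ext i j; cases i; cases j; rfl

lemma pair_symm (u w : VV n) :
    wᵀ * Matrix.J (Fin n) (ZMod 2) * u = uᵀ * Matrix.J (Fin n) (ZMod 2) * w := by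
  have h : (uᵀ * Matrix.J (Fin n) (ZMod 2) * w)ᵀ = wᵀ * Matrix.J (Fin n) (ZMod 2) * u := by
    rw [Matrix.transpose_mul, Matrix.transpose_mul, Matrix.transpose_transpose, hJT]
    simp only [Matrix.mul_assoc]
  rw [← h, transpose11]

lemma Pt (v : VV n) :
    (v * vᵀ * Matrix.J (Fin n) (ZMod 2))ᵀ = Matrix.J (Fin n) (ZMod 2) * (v * vᵀ) := by
  rw [Matrix.transpose_mul, Matrix.transpose_mul, Matrix.transpose_transpose, hJT]

lemma Tmem (v : VV n) (hv : vᵀ * Matrix.J (Fin n) (ZMod 2) * v = 0) :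
    (1 + v * vᵀ * Matrix.J (Fin n) (ZMod 2)) ∈ Matrix.symplecticGroup (Fin n) (ZMod 2) := by
  rw [SymplecticGroup.mem_iff]
  set J2 := Matrix.J (Fin n) (ZMod 2) with hJ2
  set P := v * vᵀ * J2 with hP
  have hPJ : P * J2 = v * vᵀ := by
    rw [hP, Matrix.mul_assoc, Matrix.mul_assoc, hJJ, Matrix.mul_one]
  have hJPt : J2 * Pᵀ = v * vᵀ := by
    rw [hP, Pt, ← Matrix.mul_assoc, hJJ, Matrix.one_mul]
  have hPJPt : P * J2 * Pᵀ = 0 := by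
    rw [hPJ, hP, Pt]
    calc v * vᵀ * (J2 * (v * vᵀ)) = v * (vᵀ * J2 * v) * vᵀ := by simp only [Matrix.mul_assoc]
      _ = 0 := by rw [hv]; simp
  have expand : (1 + P) * J2 * (1 + P)ᵀ = J2 + (P * J2 + J2 * Pᵀ) + P * J2 * Pᵀ := by
    rw [Matrix.transpose_add, Matrix.transpose_one]
    noncomm_ring
  rw [expand, hPJPt, hPJ, hJPt, char2M, add_zero, add_zero]


lemma ordT (v w : VV n)
    (hv : vᵀ * Matrix.J (Fin n) (ZMod 2) * v = 0)
    (hw : wᵀ * Matrix.J (Fin n) (ZMod 2) * w = 0) :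
    (((1 + v * vᵀ * Matrix.J (Fin n) (ZMod 2)) * (1 + w * wᵀ * Matrix.J (Fin n) (ZMod 2))) *
      ((1 + v * vᵀ * Matrix.J (Fin n) (ZMod 2)) * (1 + w * wᵀ * Matrix.J (Fin n) (ZMod 2))) = 1)
    ∨
    (((1 + v * vᵀ * Matrix.J (Fin n) (ZMod 2)) * (1 + w * wᵀ * Matrix.J (Fin n) (ZMod 2))) *
      (((1 + v * vᵀ * Matrix.J (Fin n) (ZMod 2)) * (1 + w * wᵀ * Matrix.J (Fin n) (ZMod 2))) *
       ((1 + v * vᵀ * Matrix.J (Fin n) (ZMod 2)) * (1 + w * wᵀ * Matrix.J (Fin n) (ZMod 2)))) = 1)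
    := by
  set J2 := Matrix.J (Fin n) (ZMod 2) with hJ2d
  set ε := (vᵀ * J2 * w) () () with hεd
  have hvw : vᵀ * J2 * w = ε • 1 := oneByOne _
  have hwv : wᵀ * J2 * v = ε • 1 := by rw [pair_symm v w]; exact hvw
  have hv0 : vᵀ * J2 * v = (0 : ZMod 2) • 1 := by rw [hv, zero_smul]
  have hw0 : wᵀ * J2 * w = (0 : ZMod 2) • 1 := by rw [hw, zero_smul]
  have hcase : ε = 0 ∨ ε = 1 := by
    have : ∀ z : ZMod 2, z = 0 ∨ z = 1 := by decide
    exact this ε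
  rcases hcase with h0 | h1
  · left
    rw [h0] at hvw hwv
    rw [zero_smul] at hvw hwv
    exact ring_ord2 char2M _ _
      (by rw [mulPat v v v v 0 hv0, zero_smul])
      (by rw [mulPat w w w w 0 hw0, zero_smul])
      (by rw [mulPat v v w w 0 (by rw [hvw, zero_smul]), zero_smul])
      (by rw [mulPat w w v v 0 (by rw [hwv, zero_smul]), zero_smul])
  · right
    rw [h1] at hvw hwv
    exact ring_ord3 char2M _ _ (v * wᵀ * J2) (w * vᵀ * J2)
      (by rw [mulPat v v v v 0 hv0, zero_smul])
      (by rw [mulPat w w w w 0 hw0, zero_smul])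
      (by rw [mulPat v v w w 1 hvw, one_smul])
      (by rw [mulPat w w v v 1 hwv, one_smul])
      (by rw [mulPat v v v w 0 hv0, zero_smul])
      (by rw [mulPat v w v v 1 hwv, one_smul])
      (by rw [mulPat w w v w 1 hwv, one_smul])
      (by rw [mulPat v w w w 0 hw0, zero_smul])
      (by rw [mulPat v w v w 1 hwv, one_smul])
      (by rw [mulPat v v w v 1 hvw, one_smul])
      (by rw [mulPat w w w v 0 hw0, zero_smul])
      (by rw [mulPat v w w v 0 hw0, zero_smul])

lemma conjT (x : MM n) (hx : xᵀ * Matrix.J (Fin n) (ZMod 2) * x = Matrix.J (Fin n) (ZMod 2))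
    (v : VV n) :
    x * (1 + v * vᵀ * Matrix.J (Fin n) (ZMod 2)) =
      (1 + (x * v) * (x * v)ᵀ * Matrix.J (Fin n) (ZMod 2)) * x := by
  have key : (x * v) * (x * v)ᵀ * Matrix.J (Fin n) (ZMod 2) * x =
      x * (v * vᵀ * Matrix.J (Fin n) (ZMod 2)) := by
    rw [Matrix.transpose_mul]
    calc x * v * (vᵀ * xᵀ) * Matrix.J (Fin n) (ZMod 2) * x
        = x * (v * (vᵀ * (xᵀ * Matrix.J (Fin n) (ZMod 2) * x))) := by
          simp only [Matrix.mul_assoc]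
      _ = x * (v * vᵀ * Matrix.J (Fin n) (ZMod 2)) := by
          rw [hx]; simp only [Matrix.mul_assoc]
  rw [Matrix.mul_add, Matrix.add_mul, Matrix.mul_one, Matrix.one_mul, key]

lemma pairing_transfer (x : MM n)
    (hx : xᵀ * Matrix.J (Fin n) (ZMod 2) * x = Matrix.J (Fin n) (ZMod 2)) (v : VV n) :
    (x * v)ᵀ * Matrix.J (Fin n) (ZMod 2) * (x * v) = vᵀ * Matrix.J (Fin n) (ZMod 2) * v := by
  rw [Matrix.transpose_mul]
  calc vᵀ * xᵀ * Matrix.J (Fin n) (ZMod 2) * (x * v)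
      = vᵀ * (xᵀ * Matrix.J (Fin n) (ZMod 2) * x) * v := by simp only [Matrix.mul_assoc]
    _ = vᵀ * Matrix.J (Fin n) (ZMod 2) * v := by rw [hx]

end MatrixPart


section Main

open Matrix

/-- The symplectic group `Sp(2n, 2)` over `ZMod 2`, with `n ≥ 2`, contains a
nontrivial 2-radical element: some `g ≠ 1` such that for all `x, y` the subgroup
generated by `⁅g,x⁆` and `⁅g,y⁆` is solvable. -/
theorem symplecticGroup_has_two_radical (n : ℕ) (hn : 2 ≤ n) :
    ∃ g : Matrix.symplecticGroup (Fin n) (ZMod 2), g ≠ 1 ∧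
      ∀ x y : Matrix.symplecticGroup (Fin n) (ZMod 2),
        IsSolvable (Subgroup.closure
          ({@Bracket.bracket _ _ commutatorElement g x, @Bracket.bracket _ _ commutatorElement g y} : Set (Matrix.symplecticGroup (Fin n) (ZMod 2)))) := by
  have npos : 0 < n := by omega
  set i0 : Fin n := ⟨0, npos⟩ with hi0
  set e : VV n := Matrix.single (Sum.inl i0 : Fin n ⊕ Fin n) () (1 : ZMod 2) with he_def
  have he : eᵀ * Matrix.J (Fin n) (ZMod 2) * e = 0 := by
    rw [he_def]
    ext i j
    simp [Matrix.mul_apply, Matrix.single, Matrix.J, Matrix.fromBlocks,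
      Matrix.transpose_apply]
  set g : Matrix.symplecticGroup (Fin n) (ZMod 2) :=
    ⟨1 + e * eᵀ * Matrix.J (Fin n) (ZMod 2), Tmem e he⟩ with hg_def
  have hg2 : g * g = 1 := by
    apply Subtype.ext
    show (1 + e * eᵀ * Matrix.J (Fin n) (ZMod 2)) * (1 + e * eᵀ * Matrix.J (Fin n) (ZMod 2)) = 1
    exact ring_invol char2M _ (by rw [mulPat e e e e 0 (by rw [he, zero_smul]), zero_smul])
  have hginv : g⁻¹ = g := inv_eq_of_mul_eq_one_right hg2
  refine ⟨g, ?_, ?_⟩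
  · intro hcontra
    have hval := congrArg (fun z : Matrix.symplecticGroup (Fin n) (ZMod 2) =>
      (z : MM n) (Sum.inl i0) (Sum.inr i0)) hcontra
    simp only [hg_def] at hval
    have hlhs : ((1 : MM n) + e * eᵀ * Matrix.J (Fin n) (ZMod 2)) (Sum.inl i0) (Sum.inr i0)
        = 1 := by
      rw [Matrix.add_apply]
      have h1 : (1 : MM n) (Sum.inl i0) (Sum.inr i0) = 0 := by
        simp [Matrix.one_apply]
      have h2 : (e * eᵀ * Matrix.J (Fin n) (ZMod 2)) (Sum.inl i0) (Sum.inr i0) = 1 := by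
        rw [he_def]
        simp [Matrix.mul_apply, Matrix.single, Matrix.J, Matrix.fromBlocks,
          Matrix.transpose_apply]
      rw [h1, h2, zero_add]
    have hrhs : ((1 : Matrix.symplecticGroup (Fin n) (ZMod 2)) : MM n)
        (Sum.inl i0) (Sum.inr i0) = 0 := by
      simp [Matrix.one_apply]
    first
      | exact one_ne_zero (hval.trans hrhs)
      | (rw [hlhs] at hval; exact one_ne_zero (hval.trans hrhs))
  · intro x y
    have hx' : (x : MM n)ᵀ * Matrix.J (Fin n) (ZMod 2) * (x : MM n) =
        Matrix.J (Fin n) (ZMod 2) := by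
      have := x.2
      rwa [SymplecticGroup.mem_iff'] at this
    have hy' : (y : MM n)ᵀ * Matrix.J (Fin n) (ZMod 2) * (y : MM n) =
        Matrix.J (Fin n) (ZMod 2) := by
      have := y.2
      rwa [SymplecticGroup.mem_iff'] at this
    set w : VV n := (x : MM n) * e with hw_def
    set u : VV n := (y : MM n) * e with hu_def
    have hwe : wᵀ * Matrix.J (Fin n) (ZMod 2) * w = 0 := by
      rw [hw_def, pairing_transfer _ hx' e, he]
    have hue : uᵀ * Matrix.J (Fin n) (ZMod 2) * u = 0 := by
      rw [hu_def, pairing_transfer _ hy' e, he]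
    set hS : Matrix.symplecticGroup (Fin n) (ZMod 2) :=
      ⟨1 + w * wᵀ * Matrix.J (Fin n) (ZMod 2), Tmem w hwe⟩ with hhS_def
    set kS : Matrix.symplecticGroup (Fin n) (ZMod 2) :=
      ⟨1 + u * uᵀ * Matrix.J (Fin n) (ZMod 2), Tmem u hue⟩ with hkS_def
    have hh2 : hS * hS = 1 := by
      apply Subtype.ext
      show (1 + w * wᵀ * Matrix.J (Fin n) (ZMod 2)) * (1 + w * wᵀ * Matrix.J (Fin n) (ZMod 2)) = 1
      exact ring_invol char2M _ (by rw [mulPat w w w w 0 (by rw [hwe, zero_smul]), zero_smul])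
    have hk2 : kS * kS = 1 := by
      apply Subtype.ext
      show (1 + u * uᵀ * Matrix.J (Fin n) (ZMod 2)) * (1 + u * uᵀ * Matrix.J (Fin n) (ZMod 2)) = 1
      exact ring_invol char2M _ (by rw [mulPat u u u u 0 (by rw [hue, zero_smul]), zero_smul])
    have hxg : x * g = hS * x := by
      apply Subtype.ext
      show (x : MM n) * (1 + e * eᵀ * Matrix.J (Fin n) (ZMod 2)) =
        (1 + w * wᵀ * Matrix.J (Fin n) (ZMod 2)) * (x : MM n)
      rw [hw_def]
      exact conjT _ hx' e
    have hyg : y * g = kS * y := by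
      apply Subtype.ext
      show (y : MM n) * (1 + e * eᵀ * Matrix.J (Fin n) (ZMod 2)) =
        (1 + u * uᵀ * Matrix.J (Fin n) (ZMod 2)) * (y : MM n)
      rw [hu_def]
      exact conjT _ hy' e
    have hconjx : x * g * x⁻¹ = hS := by rw [hxg, mul_inv_cancel_right]
    have hconjy : y * g * y⁻¹ = kS := by rw [hyg, mul_inv_cancel_right]
    have hcx : ⁅g, x⁆ = g * hS := by
      rw [commutatorElement_def, hginv, ← hconjx]; group
    have hcy : ⁅g, y⁆ = g * kS := by
      rw [commutatorElement_def, hginv, ← hconjy]; group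
    have hgh : (g * hS) * (g * hS) = 1 ∨ (g * hS) * ((g * hS) * (g * hS)) = 1 := by
      rcases ordT e w he hwe with h | h
      · left; apply Subtype.ext; exact h
      · right; apply Subtype.ext; exact h
    have hgk : (g * kS) * (g * kS) = 1 ∨ (g * kS) * ((g * kS) * (g * kS)) = 1 := by
      rcases ordT e u he hue with h | h
      · left; apply Subtype.ext; exact h
      · right; apply Subtype.ext; exact h
    have hhk : (hS * kS) * (hS * kS) = 1 ∨ (hS * kS) * ((hS * kS) * (hS * kS)) = 1 := by
      rcases ordT w u hwe hue with h | h
      · left; apply Subtype.ext; exact h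
      · right; apply Subtype.ext; exact h
    rw [hcx, hcy]
    exact master g hS kS hg2 hh2 hk2 hgh hgk hhk

end Main
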